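/- Let q : χ → ℝ≥0 be normalized (q[0] = 0) and additive (q[∑_k X_k] = ∑_k q[X_k] for all pools X). If a risk-sharing rule C has strongly aggregate contribution-over-q ratios, then C is the q-proportional rule: for every pool X with q[X_j] > 0 for some j, C_i[X] = (q[X_i] / ∑_k q[X_k]) · S_X for all i. -/

import Mathlib

open MeasureTheory

/-- Let `q` be normalized (`q[0] = 0`) and additive. If a risk-sharing rule
`C` has strongly aggregate contribution-over-`q` ratios, then `C` is the
`q`-proportional rule. -/
theorem stmt_9
    {Ω : Type*} [MeasurableSpace Ω] (μ : Measure Ω) [IsProbabilityMeasure μ]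
    {n : ℕ} (hn : 1 ≤ n)
    (χ : Set (Ω → ℝ))
    (hχnonneg : ∀ f ∈ χ, ∀ ω, (0:ℝ) ≤ f ω)
    (hχzero : (fun _ : Ω => (0:ℝ)) ∈ χ)
    (hχadd : ∀ f g : Ω → ℝ, f ∈ χ → g ∈ χ → (fun ω => f ω + g ω) ∈ χ)
    (q : (Ω → ℝ) → ℝ) (hq : ∀ f ∈ χ, 0 ≤ q f)
    (hqzero : q (fun _ => 0) = 0)
    (hqadd : ∀ X : Fin n → Ω → ℝ, (∀ i, X i ∈ χ) →
      q (fun ω => ∑ k, X k ω) = ∑ k, q (X k))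
    (C : (Fin n → Ω → ℝ) → Fin n → Ω → ℝ)
    (hfull : ∀ X : Fin n → Ω → ℝ, (∀ i, X i ∈ χ) →
      (fun ω => ∑ i, C X i ω) =ᵐ[μ] fun ω => ∑ i, X i ω)
    (hstrong : ∃ h : ℝ → ℝ → Fin n → ℝ, ∀ X : Fin n → Ω → ℝ, (∀ i, X i ∈ χ) →
      (∃ j, 0 < q (X j)) → ∀ i,
        C X i =ᵐ[μ] fun ω =>
          q (X i) * h (∑ k, X k ω) (q (fun ω' => ∑ k, X k ω')) i) :
    ∀ X : Fin n → Ω → ℝ, (∀ i, X i ∈ χ) → (∃ j, 0 < q (X j)) → ∀ i,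
      C X i =ᵐ[μ] fun ω => (q (X i) / ∑ k, q (X k)) * ∑ k, X k ω := by
 
  obtain ⟨h, hh⟩ := hstrong
  intro X hX hpos i
  haveI : NeZero n := ⟨Nat.one_le_iff_ne_zero.mp hn⟩
  rcases hpos with ⟨j, hj⟩
  set qS : ℝ := ∑ k, q (X k) with hqSdef
  have hqS : q (fun ω => ∑ k, X k ω) = qS := hqadd X hX
  have hqSpos : 0 < qS :=
    lt_of_lt_of_le hj (Finset.single_le_sum (fun k _ => hq _ (hX k)) (Finset.mem_univ j))
  have hSmem : ∀ s : Finset (Fin n), (fun ω => ∑ k ∈ s, X k ω) ∈ χ := by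
    intro s
    induction s using Finset.induction_on with
    | empty => simpa using hχzero
    | insert _ _ hns ih => simpa [Finset.sum_insert hns] using hχadd _ _ (hX _) ih
  set Y : Fin n → Ω → ℝ := fun k => if k = i then (fun ω => ∑ m, X m ω) else fun _ => (0:ℝ)
    with hYdef
  have hYmem : ∀ k, Y k ∈ χ := by
    intro k
    by_cases hk : k = i <;> simp [hYdef, hk, hSmem Finset.univ, hχzero]
  have hYsum : ∀ ω, ∑ m, Y m ω = ∑ m, X m ω := by
    intro ω
    simp [hYdef, apply_ite (fun f : Ω → ℝ => f ω)]
  have hYq : q (Y i) = qS := by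
    simp only [hYdef, if_pos rfl]
    exact hqS
  have hYq0 : ∀ k, k ≠ i → q (Y k) = 0 := by
    intro k hk
    simp only [hYdef, if_neg hk]
    exact hqzero
  have hqY : q (fun ω => ∑ m, Y m ω) = qS := by
    rw [show (fun ω => ∑ m, Y m ω) = (fun ω => ∑ m, X m ω) from funext hYsum, hqS]
  have hall : ∀ᵐ ω ∂μ, ∀ k, C Y k ω =
      q (Y k) * h (∑ m, Y m ω) (q (fun ω' => ∑ m, Y m ω')) k :=
    ae_all_iff.2 (hh Y hYmem ⟨i, by rw [hYq]; exact hqSpos⟩)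
  have hkey : ∀ᵐ ω ∂μ, qS * h (∑ m, X m ω) qS i = ∑ m, X m ω := by
    filter_upwards [hfull Y hYmem, hall] with ω hf hc
    have hs : ∑ m, Y m ω = ∑ m, X m ω := hYsum ω
    have heq : ∑ k, C Y k ω =
        ∑ k, q (Y k) * h (∑ m, Y m ω) (q (fun ω' => ∑ m, Y m ω')) k :=
      Finset.sum_congr rfl (fun k _ => hc k)
    have hsum : ∑ k, q (Y k) * h (∑ m, Y m ω) (q (fun ω' => ∑ m, Y m ω')) k
        = qS * h (∑ m, Y m ω) (q (fun ω' => ∑ m, Y m ω')) i := by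
      rw [Finset.sum_eq_single_of_mem i (Finset.mem_univ i)]
      · rw [hYq]
      · intro k _ hk
        rw [hYq0 k hk, zero_mul]
    rw [hf, hsum, hqY, hs] at heq
    exact heq.symm
  filter_upwards [hh X hX ⟨j, hj⟩ i, hkey] with ω h1 h2
  rw [h1, hqS, div_mul_eq_mul_div, eq_div_iff hqSpos.ne']
  linear_combination q (X i) * h2
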